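/- Let d, k ≥ 1 be integers, L = 2^d−1, ψ(t) = t·log(1/t), and fix p ∈ [0, 2^{-k}]. Define Δ_p = { (q_1,…,q_k) : q_i ≥ 0 for all i, L·Σ_{i=1}^k q_i = 1−p } and, for q ∈ Δ_p, g_p(q) = ( L·Σ_{i=1}^k ψ(q_i) + ψ(p) ) / ( L·Σ_{i=1}^k q_i·log(2^i) + p·log(2^k) ). Then the global maximum M of g_p on Δ_p is attained at the point q_i = A·2^{-M·i} (i = 1,…,k), where A > 0 is determined by the requirement L·Σ_{i=1}^k A·2^{-M·i} = 1−p. -/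

import Mathlib

open MeasureTheory Filter Metric Set
open scoped ENNReal NNReal

/-- The simplex `Δ_p = {q : q_i ≥ 0, L·Σ_{i=1}^k q_i = 1 − p}` with `L = 2^d − 1`
(indices shifted: `q i` stands for `q_{i+1}`). -/
def simplexP (d k : ℕ) (p : ℝ) : Set (Fin k → ℝ) :=
  {q | (∀ i, 0 ≤ q i) ∧ ((2 : ℝ) ^ d - 1) * (∑ i, q i) = 1 - p}

/-- The objective function
`g_p(q) = (L·Σ ψ(q_i) + ψ(p)) / (L·Σ q_i·log(2^i) + p·log(2^k))`, `ψ(t) = t·log(1/t)`. -/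
noncomputable def gp (d k : ℕ) (p : ℝ) (q : Fin k → ℝ) : ℝ :=
  (((2 : ℝ) ^ d - 1) * (∑ i, Real.negMulLog (q i)) + Real.negMulLog p) /
    (((2 : ℝ) ^ d - 1) * (∑ i, q i * Real.log ((2 : ℝ) ^ ((i : ℕ) + 1)))
      + p * Real.log ((2 : ℝ) ^ k))

/-- Gibbs-type inequality: `−q log q + q log r ≤ r − q` for `q ≥ 0`, `r > 0`. -/
lemma aux_gibbs_ineq {q r : ℝ} (hq : 0 ≤ q) (hr : 0 < r) :
    Real.negMulLog q + q * Real.log r ≤ r - q := by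
  rcases eq_or_lt_of_le hq with h | h
  · simp [← h, Real.negMulLog, hr.le]
  · have h1 : Real.log (r / q) ≤ r / q - 1 := Real.log_le_sub_one_of_pos (by positivity)
    have h2 : Real.log (r / q) = Real.log r - Real.log q := Real.log_div hr.ne' h.ne'
    have h3 : q * (r / q) = r := by field_simp
    have := mul_le_mul_of_nonneg_left h1 hq
    rw [h2] at this
    rw [Real.negMulLog]
    nlinarith

/-- For `d, k ≥ 1` and `p ∈ [0, 2^{-k}]`, the global maximum `M` of `g_p`
on `Δ_p` is attained at the point `q_i = A·2^{-M·i}` (`i = 1,…,k`), where `A > 0` is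
determined by the requirement that this point lies in `Δ_p`. -/
theorem isGreatest_gp_at_geometric_point (d k : ℕ) (hd : 1 ≤ d) (hk : 1 ≤ k)
    (p : ℝ) (hp0 : 0 ≤ p) (hp : p ≤ ((2 : ℝ) ^ k)⁻¹) :
    ∃ M A : ℝ, 0 < A ∧
      IsGreatest (gp d k p '' simplexP d k p) M ∧
      (fun i : Fin k => A * (2 : ℝ) ^ (-(M * ((i : ℕ) + 1)))) ∈ simplexP d k p ∧
      gp d k p (fun i : Fin k => A * (2 : ℝ) ^ (-(M * ((i : ℕ) + 1)))) = M := by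
  have hkpos : 0 < k := hk
  haveI : Nonempty (Fin k) := Fin.pos_iff_nonempty.mp hkpos
  set L : ℝ := (2 : ℝ) ^ d - 1 with hLdef
  have hL : 1 ≤ L := by
    have : (2:ℝ)^1 ≤ (2:ℝ)^d := pow_le_pow_right₀ one_le_two hd
    simp only [hLdef]; simp at this; linarith
  have hL0 : 0 < L := lt_of_lt_of_le one_pos hL
  have hlog2 : (0:ℝ) < Real.log 2 := Real.log_pos one_lt_two
  have hp1 : p < 1 := by
    have h2k : (1:ℝ) ≤ (2:ℝ)^k := one_le_pow₀ one_le_two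
    have h2k2 : (2:ℝ) ≤ (2:ℝ)^k := by
      calc (2:ℝ) = 2^1 := (pow_one 2).symm
      _ ≤ 2^k := pow_le_pow_right₀ one_le_two hk
    have : ((2:ℝ)^k)⁻¹ ≤ 2⁻¹ := by
      apply inv_anti₀ (by norm_num) h2k2
    linarith [hp.trans this]
  have h1p : (0:ℝ) < 1 - p := by linarith
  -- the geometric sum as a function of the exponent parameter
  set S : ℝ → ℝ := fun m => ∑ i : Fin k, (2 : ℝ) ^ (-(m * ((i : ℕ) + 1))) with hSdef
  have hS : ∀ m, 0 < S m := fun m =>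
    Finset.sum_pos (fun i _ => Real.rpow_pos_of_pos two_pos _) Finset.univ_nonempty
  have hScont : Continuous S := by
    apply continuous_finset_sum
    intro i _
    have : (fun m : ℝ => (2:ℝ) ^ (-(m * ((i:ℕ)+1)))) =
        fun m => Real.exp (Real.log 2 * (-(m * ((i:ℕ)+1)))) := by
      funext m; rw [Real.rpow_def_of_pos two_pos]
    rw [this]
    exact Real.continuous_exp.comp (by continuity)
  -- the function whose zero determines the optimal exponent
  set φ : ℝ → ℝ := fun m =>
    -(1 - p) * Real.log ((1 - p) / (L * S m)) + Real.negMulLog p - p * m * k * Real.log 2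
    with hφdef
  have hLS : ∀ m, 0 < L * S m := fun m => mul_pos hL0 (hS m)
  have hφcont : Continuous φ := by
    have h1 : Continuous fun m => (1 - p) / (L * S m) :=
      continuous_const.div (continuous_const.mul hScont) (fun m => (hLS m).ne')
    have h2 : Continuous fun m => Real.log ((1 - p) / (L * S m)) :=
      h1.log (fun m => ne_of_gt (div_pos h1p (hLS m)))
    exact ((continuous_const.mul h2).add continuous_const).sub
      (((continuous_const.mul continuous_id).mul continuous_const).mul continuous_const)
  -- rewrite of log((1-p)/(L*S m))
  have hlogA : ∀ m, Real.log ((1 - p) / (L * S m)) = Real.log (1 - p) - Real.log (L * S m) :=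
    fun m => Real.log_div h1p.ne' (hLS m).ne'
  set c₀ : ℝ := -(1 - p) * Real.log (1 - p) + Real.negMulLog p with hc₀def
  -- lower bound valid for all m : φ m ≥ c₀ - m * (k * log 2)
  have hlow : ∀ m : ℝ, c₀ - m * (k * Real.log 2) ≤ φ m := by
    intro m
    have hterm : (2:ℝ) ^ (-(m * k)) ≤ S m := by
      have hcast : -(m * ((((⟨k - 1, by omega⟩ : Fin k) : ℕ) : ℝ) + 1)) = -(m * k) := by
        have : ((k - 1 : ℕ) : ℝ) = (k : ℝ) - 1 := by
          push_cast [Nat.cast_sub hk]; ring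
        simp only [this]; ring
      calc (2:ℝ) ^ (-(m * k))
          = (2:ℝ) ^ (-(m * ((((⟨k - 1, by omega⟩ : Fin k) : ℕ) : ℝ) + 1))) := by rw [hcast]
        _ ≤ S m := Finset.single_le_sum
            (f := fun i : Fin k => (2 : ℝ) ^ (-(m * (((i : ℕ) : ℝ) + 1))))
            (fun i _ => (Real.rpow_pos_of_pos two_pos _).le) (Finset.mem_univ _)
    have hLSge : (2:ℝ) ^ (-(m * k)) ≤ L * S m := by
      calc (2:ℝ) ^ (-(m * k)) ≤ S m := hterm
      _ = 1 * S m := (one_mul _).symm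
      _ ≤ L * S m := by apply mul_le_mul_of_nonneg_right hL (hS m).le
    have hloglb : -(m * k) * Real.log 2 ≤ Real.log (L * S m) := by
      have := Real.log_le_log (Real.rpow_pos_of_pos two_pos _) hLSge
      rwa [Real.log_rpow two_pos] at this
    have := mul_le_mul_of_nonneg_left hloglb h1p.le
    simp only [hφdef, hlogA, hc₀def]
    nlinarith
  have h_tendsto_bot : Tendsto φ atBot atTop := by
    have hc : (0:ℝ) < (k : ℝ) * Real.log 2 := by positivity
    have hlin : Tendsto (fun m : ℝ => c₀ - m * ((k:ℝ) * Real.log 2)) atBot atTop := by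
      have h1 : Tendsto (fun m : ℝ => -m) atBot atTop := tendsto_neg_atBot_atTop
      have h2 : Tendsto (fun m : ℝ => -m * ((k:ℝ) * Real.log 2)) atBot atTop :=
        h1.atTop_mul_const hc
      have h3 := tendsto_atTop_add_const_left atBot c₀ h2
      exact h3.congr (fun x => by ring)
    exact tendsto_atTop_mono hlow hlin
  -- upper bound valid for m ≥ 0 : φ m ≤ c₁ - m * ((1-p) * log 2)
  set c₁ : ℝ := (1 - p) * Real.log (L * k) + c₀ with hc₁def
  have hLk : (0:ℝ) < L * k := by positivity
  have hhigh : ∀ m : ℝ, 0 ≤ m → φ m ≤ c₁ - m * ((1 - p) * Real.log 2) := by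
    intro m hm
    have hSle : S m ≤ (k : ℝ) * (2:ℝ) ^ (-m) := by
      have : ∀ i : Fin k, (2:ℝ) ^ (-(m * ((i:ℕ) + 1))) ≤ (2:ℝ) ^ (-m) := by
        intro i
        apply Real.rpow_le_rpow_of_exponent_le one_le_two
        have : m * 1 ≤ m * ((i:ℕ) + 1) := by
          apply mul_le_mul_of_nonneg_left _ hm
          have : (0:ℝ) ≤ ((i:ℕ):ℝ) := Nat.cast_nonneg _
          linarith
        linarith
      calc S m ≤ ∑ _i : Fin k, (2:ℝ) ^ (-m) := Finset.sum_le_sum (fun i _ => this i)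
      _ = (k:ℝ) * (2:ℝ) ^ (-m) := by rw [Finset.sum_const]; simp [mul_comm]
    have hLSle : L * S m ≤ L * (k:ℝ) * (2:ℝ)^(-m) := by
      have := mul_le_mul_of_nonneg_left hSle hL0.le
      linarith [this]
    have hlogub : Real.log (L * S m) ≤ Real.log (L * k) + (-m) * Real.log 2 := by
      have h1 : Real.log (L * S m) ≤ Real.log (L * (k:ℝ) * (2:ℝ)^(-m)) :=
        Real.log_le_log (hLS m) hLSle
      have h2 : Real.log (L * (k:ℝ) * (2:ℝ)^(-m)) =
          Real.log (L * k) + (-m) * Real.log 2 := by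
        rw [Real.log_mul hLk.ne' (Real.rpow_pos_of_pos two_pos _).ne',
          Real.log_rpow two_pos]
      linarith [h1, h2.le]
    have h3 := mul_le_mul_of_nonneg_left hlogub h1p.le
    have h4 : 0 ≤ p * m * k * Real.log 2 := by positivity
    simp only [hφdef, hlogA, hc₁def, hc₀def]
    nlinarith
  have h_tendsto_top : Tendsto φ atTop atBot := by
    have hc : (0:ℝ) < (1 - p) * Real.log 2 := by positivity
    have hlin : Tendsto (fun m : ℝ => c₁ - m * ((1 - p) * Real.log 2)) atTop atBot := by
      have h2 : Tendsto (fun m : ℝ => m * ((1 - p) * Real.log 2)) atTop atTop :=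
        tendsto_id.atTop_mul_const hc
      have h3 := tendsto_atBot_add_const_left atTop c₁ (tendsto_neg_atTop_atBot.comp h2)
      exact h3.congr (fun x => by simp only [Function.comp_apply]; ring)
    apply tendsto_atBot_mono' atTop _ hlin
    filter_upwards [eventually_ge_atTop (0:ℝ)] with m hm
    exact hhigh m hm
  -- obtain the fixed point M with φ M = 0
  obtain ⟨M, hM0⟩ := hφcont.surjective' h_tendsto_bot h_tendsto_top 0
  set A : ℝ := (1 - p) / (L * S M) with hAdef
  have hA : 0 < A := div_pos h1p (hLS M)
  set r : Fin k → ℝ := fun i => A * (2 : ℝ) ^ (-(M * ((i : ℕ) + 1))) with hrdef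
  have hrpos : ∀ i, 0 < r i := fun i => mul_pos hA (Real.rpow_pos_of_pos two_pos _)
  have hrsum : ∑ i, r i = A * S M := by
    simp only [hrdef, hSdef, Finset.mul_sum]
  have hLAS : L * (A * S M) = 1 - p := by
    rw [hAdef]
    field_simp
    exact div_self (hS M).ne'
  have hrmem : r ∈ simplexP d k p := by
    refine ⟨fun i => (hrpos i).le, ?_⟩
    show L * (∑ i, r i) = 1 - p
    rw [hrsum]; exact hLAS
  -- log of r i
  have hlogr : ∀ i : Fin k, Real.log (r i) =
      Real.log A + (-(M * ((i:ℕ) + 1))) * Real.log 2 := by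
    intro i
    rw [hrdef]
    simp only []
    rw [Real.log_mul hA.ne' (Real.rpow_pos_of_pos two_pos _).ne',
      Real.log_rpow two_pos]
  have hφM : -(1 - p) * Real.log A + Real.negMulLog p - p * M * k * Real.log 2 = 0 := hM0
  -- log of 2^(i+1) (natural power)
  have hlogpow : ∀ i : Fin k, Real.log ((2:ℝ) ^ ((i:ℕ) + 1)) = (((i:ℕ):ℝ) + 1) * Real.log 2 := by
    intro i
    rw [Real.log_pow]
    push_cast
    ring
  have hlogpk : Real.log ((2:ℝ) ^ k) = (k:ℝ) * Real.log 2 := by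
    rw [Real.log_pow]
  -- key identity: for q in the simplex, N q - M * D q = L * Σ (ψ(q i) + q i * log (r i))
  have hkey : ∀ q : Fin k → ℝ, (∀ i, 0 ≤ q i) → L * (∑ i, q i) = 1 - p →
      (L * (∑ i, Real.negMulLog (q i)) + Real.negMulLog p)
        - M * (L * (∑ i, q i * Real.log ((2:ℝ) ^ ((i:ℕ) + 1))) + p * Real.log ((2:ℝ)^k))
      = L * ∑ i, (Real.negMulLog (q i) + q i * Real.log (r i)) := by
    intro q hq hqs
    have e1 : ∑ i, (Real.negMulLog (q i) + q i * Real.log (r i))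
        = (∑ i, Real.negMulLog (q i)) + (∑ i, q i) * Real.log A
          - M * ∑ i, q i * Real.log ((2:ℝ) ^ ((i:ℕ) + 1)) := by
      rw [Finset.sum_mul, Finset.mul_sum, ← Finset.sum_add_distrib, ← Finset.sum_sub_distrib]
      apply Finset.sum_congr rfl
      intro i _
      rw [hlogr i, hlogpow i]
      ring
    rw [e1, hlogpk]
    have h5 : L * ((∑ i, q i) * Real.log A) = (1 - p) * Real.log A := by
      rw [← mul_assoc, hqs]
    linear_combination hφM - h5
  -- denominator positivity on the simplex
  have hD : ∀ q : Fin k → ℝ, (∀ i, 0 ≤ q i) → L * (∑ i, q i) = 1 - p →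
      0 < L * (∑ i, q i * Real.log ((2:ℝ) ^ ((i:ℕ) + 1))) + p * Real.log ((2:ℝ)^k) := by
    intro q hq hqs
    have h1 : (∑ i, q i) * Real.log 2 ≤ ∑ i, q i * Real.log ((2:ℝ) ^ ((i:ℕ) + 1)) := by
      rw [Finset.sum_mul]
      apply Finset.sum_le_sum
      intro i _
      rw [hlogpow i]
      have : Real.log 2 ≤ (((i:ℕ):ℝ) + 1) * Real.log 2 := by
        nlinarith [Nat.cast_nonneg (α := ℝ) (i:ℕ), hlog2]
      exact mul_le_mul_of_nonneg_left this (hq i)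
    have h2 : 0 ≤ p * Real.log ((2:ℝ)^k) := by
      rw [hlogpk]; positivity
    have h3 : L * ((∑ i, q i) * Real.log 2) = (1 - p) * Real.log 2 := by
      rw [← mul_assoc, hqs]
    have h4 := mul_le_mul_of_nonneg_left h1 hL0.le
    have h5 : 0 < (1 - p) * Real.log 2 := by positivity
    linarith [h4, h3, h2, h5]
  -- value at r equals M
  have hval : gp d k p r = M := by
    have hkr := hkey r (fun i => (hrpos i).le) (by rw [hrsum]; exact hLAS)
    have hz : ∑ i, (Real.negMulLog (r i) + r i * Real.log (r i)) = 0 := by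
      apply Finset.sum_eq_zero
      intro i _
      simp [Real.negMulLog]
    rw [hz, mul_zero, sub_eq_zero] at hkr
    have hDr := hD r (fun i => (hrpos i).le) (by rw [hrsum]; exact hLAS)
    simp only [gp]
    rw [← hLdef, hkr, mul_div_assoc, div_self hDr.ne', mul_one]
  -- upper bound
  have hub : ∀ y ∈ gp d k p '' simplexP d k p, y ≤ M := by
    rintro y ⟨q, ⟨hq, hqs⟩, rfl⟩
    have hkq := hkey q hq hqs
    have hsum_le : ∑ i, (Real.negMulLog (q i) + q i * Real.log (r i)) ≤
        ∑ i, (r i - q i) := Finset.sum_le_sum (fun i _ => aux_gibbs_ineq (hq i) (hrpos i))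
    have hsum0 : L * ∑ i, (r i - q i) = 0 := by
      rw [Finset.sum_sub_distrib, mul_sub, hqs, hrsum, hLAS]
      ring
    have hNle : (L * (∑ i, Real.negMulLog (q i)) + Real.negMulLog p)
        - M * (L * (∑ i, q i * Real.log ((2:ℝ) ^ ((i:ℕ) + 1))) + p * Real.log ((2:ℝ)^k))
        ≤ 0 := by
      rw [hkq]
      calc L * ∑ i, (Real.negMulLog (q i) + q i * Real.log (r i))
          ≤ L * ∑ i, (r i - q i) := mul_le_mul_of_nonneg_left hsum_le hL0.le
        _ = 0 := hsum0
    have hDq := hD q hq hqs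
    simp only [gp]
    rw [← hLdef, div_le_iff₀ hDq]
    linarith
  exact ⟨M, A, hA, ⟨⟨r, hrmem, hval⟩, hub⟩, hrmem, hval⟩
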